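/- arXiv:0805.1964 — 5 statements merged into one kernel-verified Lean document; each statement's English description precedes it below -/
import Mathlib

section
/- The number of 132-avoiding permutations of length n equals the n-th Catalan number C_n = (1/(n+1))·binom(2n, n). -/
open Equiv

/-- The word `w` contains the pattern `p`: some subsequence of `w` is
order-isomorphic to `p`. -/
def Contains {α β : Type*} [LT α] [LT β] {n k : ℕ} (w : Fin n → α) (p : Fin k → β) : Prop :=
  ∃ f : Fin k → Fin n, StrictMono f ∧ ∀ i j : Fin k, p i < p j ↔ w (f i) < w (f j)

/-- The pattern 132 (written with 0-indexed values as (0,2,1)). -/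
def pat132 : Fin 3 → ℕ := ![0, 2, 1]

/-- `w` avoids the pattern 132. -/
def Avoids132 {n : ℕ} (w : Equiv.Perm (Fin n)) : Prop :=
  ¬ Contains (fun i => w i) pat132

/-- Pattern containment between permutations. -/
def ContainsP {n k : ℕ} (w : Equiv.Perm (Fin n)) (p : Equiv.Perm (Fin k)) : Prop :=
  Contains (fun i => w i) (fun i => p i)

/-- `w` is (up-down) alternating: `w 0 < w 1 > w 2 < w 3 > ⋯` (0-indexed). -/
def Alternating {m : ℕ} (w : Equiv.Perm (Fin m)) : Prop :=
  ∀ i : ℕ, ∀ h : i + 1 < m,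
    (i % 2 = 0 → w ⟨i, by omega⟩ < w ⟨i + 1, h⟩) ∧
    (i % 2 = 1 → w ⟨i + 1, h⟩ < w ⟨i, by omega⟩)

/-- The even-indexed (in 1-indexed terms: `w₂, w₄, …, w₂ₙ`) entries of `w`
are order-isomorphic to `u`. -/
def OrderIsoEven {n : ℕ} (w : Equiv.Perm (Fin (2 * n + 1))) (u : Equiv.Perm (Fin n)) : Prop :=
  ∀ i j : Fin n, u i < u j ↔
    w ⟨2 * (i : ℕ) + 1, by have := i.isLt; omega⟩ < w ⟨2 * (j : ℕ) + 1, by have := j.isLt; omega⟩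

lemma pat0 : pat132 0 = 0 := rfl
lemma pat1 : pat132 1 = 2 := rfl
lemma pat2 : pat132 2 = 1 := rfl

lemma contains132_iff {n m : ℕ} (w : Fin n → Fin m) :
    Contains w pat132 ↔ ∃ a b c : Fin n, a < b ∧ b < c ∧ w a < w c ∧ w c < w b := by
  constructor
  · rintro ⟨f, hmono, hiff⟩
    exact ⟨f 0, f 1, f 2, hmono (by decide), hmono (by decide),
      (hiff 0 2).mp (by rw [pat0, pat2]; omega), (hiff 2 1).mp (by rw [pat1, pat2]; omega)⟩
  · rintro ⟨a, b, c, hab, hbc, h1, h2⟩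
    refine ⟨fun i => if i.val = 0 then a else if i.val = 1 then b else c, ?_, ?_⟩
    · rintro ⟨iv, hi⟩ ⟨jv, hj⟩ hij
      simp only [Fin.mk_lt_mk] at hij
      interval_cases iv <;> interval_cases jv <;> simp only [] <;> norm_num
      · exact hab
      · exact hab.trans hbc
      · exact hbc
    · rintro ⟨iv, hi⟩ ⟨jv, hj⟩
      have hwab : w a < w b := h1.trans h2
      interval_cases iv <;> interval_cases jv <;>
        simp only [pat132] <;> norm_num <;>
        first
          | exact hwab | exact h1 | exact h2
          | exact hwab.le | exact h1.le | exact h2.le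

section Glue
variable {n j : ℕ}

def glueFun (hj : j ≤ n) (u : Perm (Fin j)) (v : Perm (Fin (n - j))) :
    Fin (n + 1) → Fin (n + 1) := fun i =>
  if h : (i : ℕ) < j then ⟨(u ⟨i, h⟩ : ℕ) + (n - j), by have := (u ⟨i, h⟩).isLt; omega⟩
  else if h2 : (i : ℕ) = j then ⟨n, by omega⟩
  else ⟨(v ⟨(i : ℕ) - j - 1, by have := i.isLt; omega⟩ : ℕ),
    by have := (v ⟨(i : ℕ) - j - 1, by have := i.isLt; omega⟩).isLt; omega⟩

variable (hj : j ≤ n) (u : Perm (Fin j)) (v : Perm (Fin (n - j)))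

lemma gf_lo {i : Fin (n+1)} (h : (i : ℕ) < j) :
    (glueFun hj u v i : ℕ) = (u ⟨i, h⟩ : ℕ) + (n - j) := by
  simp [glueFun, h]

lemma gf_mid {i : Fin (n+1)} (h : (i : ℕ) = j) : (glueFun hj u v i : ℕ) = n := by
  have h1 : ¬ (i : ℕ) < j := by omega
  simp [glueFun, h1, h]

lemma gf_hi {i : Fin (n+1)} (h : j < (i : ℕ)) :
    (glueFun hj u v i : ℕ) = (v ⟨(i : ℕ) - j - 1, by have := i.isLt; omega⟩ : ℕ) := by
  have h1 : ¬ (i : ℕ) < j := by omega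
  have h2 : ¬ (i : ℕ) = j := by omega
  simp [glueFun, h1, h2]

lemma gf_lo_range {i : Fin (n+1)} (h : (i : ℕ) < j) :
    n - j ≤ (glueFun hj u v i : ℕ) ∧ (glueFun hj u v i : ℕ) < n := by
  rw [gf_lo hj u v h]; have := (u ⟨i, h⟩).isLt; omega

lemma gf_hi_range {i : Fin (n+1)} (h : j < (i : ℕ)) :
    (glueFun hj u v i : ℕ) < n - j := by
  rw [gf_hi hj u v h]; exact (v _).isLt

lemma glueFun_inj : Function.Injective (glueFun hj u v) := by
  intro a b hab
  have hv : (glueFun hj u v a : ℕ) = (glueFun hj u v b : ℕ) := congrArg Fin.val hab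
  rcases lt_trichotomy ((a : ℕ)) j with ha | ha | ha <;>
    rcases lt_trichotomy ((b : ℕ)) j with hb | hb | hb
  · rw [gf_lo hj u v ha, gf_lo hj u v hb] at hv
    have := u.injective (Fin.ext (by omega : ((u ⟨a, ha⟩ : Fin j) : ℕ) = (u ⟨b, hb⟩ : ℕ)))
    exact Fin.ext (congrArg Fin.val this |>.trans rfl)
  · rw [gf_lo hj u v ha, gf_mid hj u v hb] at hv
    have := (u ⟨a, ha⟩).isLt; omega
  · have h1 := (gf_lo_range hj u v ha).1
    have h2 := gf_hi_range hj u v hb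
    omega
  · rw [gf_mid hj u v ha, gf_lo hj u v hb] at hv
    have := (u ⟨b, hb⟩).isLt; omega
  · exact Fin.ext (ha.trans hb.symm)
  · rw [gf_mid hj u v ha] at hv
    have h2 := gf_hi_range hj u v hb
    omega
  · have h1 := (gf_lo_range hj u v hb).1
    have h2 := gf_hi_range hj u v ha
    omega
  · rw [gf_mid hj u v hb] at hv
    have h2 := gf_hi_range hj u v ha
    omega
  · rw [gf_hi hj u v ha, gf_hi hj u v hb] at hv
    have := v.injective (Fin.ext hv)
    have h3 := congrArg Fin.val this
    simp only at h3
    exact Fin.ext (by omega)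

noncomputable def glue : Perm (Fin (n + 1)) :=
  Equiv.ofBijective _ (Finite.injective_iff_bijective.mp (glueFun_inj hj u v))

lemma glue_apply (i : Fin (n+1)) : glue hj u v i = glueFun hj u v i := rfl

lemma glue_avoids (hu : Avoids132 u) (hv : Avoids132 v) : Avoids132 (glue hj u v) := by
  rw [Avoids132, contains132_iff]
  rintro ⟨a, b, c, hab, hbc, h1, h2⟩
  simp only [glue_apply] at h1 h2
  rw [Fin.lt_def] at h1 h2
  rcases lt_trichotomy ((a : ℕ)) j with ha | ha | ha
  · -- a in prefix; show c (hence b) in prefix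
    have hcj : (c : ℕ) < j := by
      rcases lt_trichotomy ((c : ℕ)) j with hc | hc | hc
      · exact hc
      · exfalso
        rw [gf_mid hj u v hc] at h2
        have := (glueFun hj u v b).isLt
        omega
      · exfalso
        have r1 := (gf_lo_range hj u v ha).1
        have r2 := gf_hi_range hj u v hc
        omega
    have hbj : (b : ℕ) < j := lt_trans (Fin.lt_def.mp hbc) hcj
    apply hu
    rw [contains132_iff]
    refine ⟨⟨a, ha⟩, ⟨b, hbj⟩, ⟨c, hcj⟩, Fin.mk_lt_mk.mpr (Fin.lt_def.mp hab),
      Fin.mk_lt_mk.mpr (Fin.lt_def.mp hbc), ?_, ?_⟩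
    · rw [gf_lo hj u v ha, gf_lo hj u v hcj] at h1
      exact Fin.lt_def.mpr (by omega)
    · rw [gf_lo hj u v hcj, gf_lo hj u v hbj] at h2
      exact Fin.lt_def.mpr (by omega)
  · -- a at position j : impossible since glue a = n is max
    exfalso
    rw [gf_mid hj u v ha] at h1
    have := (glueFun hj u v c).isLt
    omega
  · -- a in suffix, so are b and c
    have hbj : j < (b : ℕ) := lt_trans ha (Fin.lt_def.mp hab)
    have hcj : j < (c : ℕ) := lt_trans hbj (Fin.lt_def.mp hbc)
    apply hv
    rw [contains132_iff]
    have hha := a.isLt; have hhb := b.isLt; have hhc := c.isLt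
    refine ⟨⟨(a : ℕ) - j - 1, by omega⟩, ⟨(b : ℕ) - j - 1, by omega⟩,
      ⟨(c : ℕ) - j - 1, by omega⟩, Fin.mk_lt_mk.mpr (by have := Fin.lt_def.mp hab; omega),
      Fin.mk_lt_mk.mpr (by have := Fin.lt_def.mp hbc; omega), ?_, ?_⟩
    · rw [gf_hi hj u v ha, gf_hi hj u v hcj] at h1
      exact Fin.lt_def.mpr h1
    · rw [gf_hi hj u v hcj, gf_hi hj u v hbj] at h2
      exact Fin.lt_def.mpr h2

end Glue
section Decomp
variable {n : ℕ}

/-- Position of the maximum value `n`. -/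
noncomputable def maxPos (w : Perm (Fin (n+1))) : Fin (n+1) := w.symm ⟨n, n.lt_succ_self⟩

lemma w_maxPos (w : Perm (Fin (n+1))) : w (maxPos w) = ⟨n, n.lt_succ_self⟩ :=
  w.apply_symm_apply _

lemma w_ne_top (w : Perm (Fin (n+1))) {i : Fin (n+1)} (h : i ≠ maxPos w) : (w i : ℕ) < n := by
  have h2 : w i ≠ ⟨n, n.lt_succ_self⟩ := by
    intro he
    exact h (by rw [← w_maxPos w] at he; exact w.injective he)
  have h3 : (w i : ℕ) ≠ n := fun hv => h2 (Fin.ext hv)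
  have := (w i).isLt
  omega

lemma key1 (w : Perm (Fin (n+1))) (hw : Avoids132 w) {i k : Fin (n+1)}
    (hi : i < maxPos w) (hk : maxPos w < k) : w k < w i := by
  by_contra hcon
  push_neg at hcon
  have hne : w i ≠ w k := fun h => (ne_of_lt (hi.trans hk)) (w.injective h)
  have hlt : w i < w k := lt_of_le_of_ne hcon hne
  apply hw
  rw [contains132_iff]
  refine ⟨i, maxPos w, k, hi, hk, hlt, ?_⟩
  rw [w_maxPos w]
  exact Fin.lt_def.mpr (w_ne_top w (ne_of_gt hk))

lemma suffix_small (w : Perm (Fin (n+1))) (hw : Avoids132 w) {k : Fin (n+1)}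
    (hk : maxPos w < k) : (w k : ℕ) < n - (maxPos w : ℕ) := by
  classical
  have hsub : insert (w (maxPos w)) ((Finset.Iio (maxPos w)).image w) ⊆ Finset.Ioi (w k) := by
    intro x hx
    rcases Finset.mem_insert.mp hx with rfl | hx
    · rw [Finset.mem_Ioi, w_maxPos w]
      exact Fin.lt_def.mpr (w_ne_top w (ne_of_gt hk))
    · obtain ⟨i, hi, rfl⟩ := Finset.mem_image.mp hx
      exact Finset.mem_Ioi.mpr (key1 w hw (Finset.mem_Iio.mp hi) hk)
  have hnot : w (maxPos w) ∉ (Finset.Iio (maxPos w)).image w := by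
    intro hmem
    obtain ⟨i, hi, he⟩ := Finset.mem_image.mp hmem
    have := w.injective he
    rw [this] at hi
    exact absurd (Finset.mem_Iio.mp hi) (lt_irrefl _)
  have hc := Finset.card_le_card hsub
  rw [Finset.card_insert_of_notMem hnot,
    Finset.card_image_of_injective _ w.injective, Fin.card_Iio, Fin.card_Ioi] at hc
  have := k.isLt; have := (maxPos w).isLt; have := (w k).isLt
  omega

lemma prefix_big (w : Perm (Fin (n+1))) (hw : Avoids132 w) {i : Fin (n+1)}
    (hi : i < maxPos w) : n - (maxPos w : ℕ) ≤ (w i : ℕ) := by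
  classical
  have hsub : (Finset.Ioi (maxPos w)).image w ⊆ Finset.Iio (w i) := by
    intro x hx
    obtain ⟨k, hk, rfl⟩ := Finset.mem_image.mp hx
    exact Finset.mem_Iio.mpr (key1 w hw hi (Finset.mem_Ioi.mp hk))
  have hc := Finset.card_le_card hsub
  rw [Finset.card_image_of_injective _ w.injective, Fin.card_Ioi, Fin.card_Iio] at hc
  have := (maxPos w).isLt
  omega

lemma decomp (w : Perm (Fin (n+1))) (hw : Avoids132 w) :
    ∃ (j : ℕ) (hj : j ≤ n) (u : Perm (Fin j)) (v : Perm (Fin (n - j))),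
      Avoids132 u ∧ Avoids132 v ∧ glue hj u v = w := by
  classical
  set J := maxPos w with hJdef
  have hj : (J : ℕ) ≤ n := by have := J.isLt; omega
  have hwJ : w J = ⟨n, n.lt_succ_self⟩ := w_maxPos w
  have hpre : ∀ i : Fin (n+1), (i : ℕ) < (J : ℕ) →
      n - (J : ℕ) ≤ (w i : ℕ) ∧ (w i : ℕ) < n := by
    intro i hi
    exact ⟨prefix_big w hw (Fin.lt_def.mpr hi),
      w_ne_top w (fun he => by rw [he] at hi; omega)⟩
  have hsuf : ∀ k : Fin (n+1), (J : ℕ) < (k : ℕ) → (w k : ℕ) < n - (J : ℕ) :=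
    fun k hk => suffix_small w hw (Fin.lt_def.mpr hk)
  refine ⟨(J : ℕ), hj, ?_⟩
  -- the two small permutations
  have hufb : ∀ i : Fin (J : ℕ),
      (w ⟨(i : ℕ), by have := i.isLt; omega⟩ : ℕ) - (n - (J : ℕ)) < (J : ℕ) := by
    intro i
    have := hpre ⟨(i : ℕ), by have := i.isLt; omega⟩ i.isLt
    omega
  set uf : Fin (J : ℕ) → Fin (J : ℕ) :=
    fun i => ⟨(w ⟨(i : ℕ), by have := i.isLt; omega⟩ : ℕ) - (n - (J : ℕ)), hufb i⟩ with hufdef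
  have uf_inj : Function.Injective uf := by
    intro x y hxy
    have hv := congrArg Fin.val hxy
    simp only [hufdef] at hv
    have hx := hpre ⟨(x : ℕ), by have := x.isLt; omega⟩ x.isLt
    have hy := hpre ⟨(y : ℕ), by have := y.isLt; omega⟩ y.isLt
    have : w ⟨(x : ℕ), by have := x.isLt; omega⟩ = w ⟨(y : ℕ), by have := y.isLt; omega⟩ :=
      Fin.ext (by omega)
    have h6 := congrArg Fin.val (w.injective this)
    simp only at h6
    exact Fin.ext (by omega)
  set u : Perm (Fin (J : ℕ)) :=
    Equiv.ofBijective uf (Finite.injective_iff_bijective.mp uf_inj) with hudef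
  have hvfb : ∀ k : Fin (n - (J : ℕ)),
      (w ⟨(J : ℕ) + 1 + (k : ℕ), by have := k.isLt; omega⟩ : ℕ) < n - (J : ℕ) := by
    intro k
    exact hsuf _ (by simp; omega)
  set vf : Fin (n - (J : ℕ)) → Fin (n - (J : ℕ)) :=
    fun k => ⟨(w ⟨(J : ℕ) + 1 + (k : ℕ), by have := k.isLt; omega⟩ : ℕ), hvfb k⟩ with hvfdef
  have vf_inj : Function.Injective vf := by
    intro x y hxy
    have hv := congrArg Fin.val hxy
    simp only [hvfdef] at hv
    have : w ⟨(J : ℕ) + 1 + (x : ℕ), by have := x.isLt; omega⟩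
        = w ⟨(J : ℕ) + 1 + (y : ℕ), by have := y.isLt; omega⟩ := Fin.ext hv
    have := congrArg Fin.val (w.injective this)
    simp only at this
    exact Fin.ext (by omega)
  set v : Perm (Fin (n - (J : ℕ))) :=
    Equiv.ofBijective vf (Finite.injective_iff_bijective.mp vf_inj) with hvdef
  have hu : Avoids132 u := by
    rw [Avoids132, contains132_iff]
    rintro ⟨a, b, c, hab, hbc, h1, h2⟩
    apply hw
    rw [contains132_iff]
    have hva := hpre ⟨(a : ℕ), by have := a.isLt; omega⟩ a.isLt
    have hvb := hpre ⟨(b : ℕ), by have := b.isLt; omega⟩ b.isLt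
    have hvc := hpre ⟨(c : ℕ), by have := c.isLt; omega⟩ c.isLt
    rw [Fin.lt_def] at h1 h2
    simp only [hudef, Equiv.ofBijective_apply, hufdef] at h1 h2
    refine ⟨⟨(a : ℕ), by have := a.isLt; omega⟩, ⟨(b : ℕ), by have := b.isLt; omega⟩,
      ⟨(c : ℕ), by have := c.isLt; omega⟩,
      Fin.mk_lt_mk.mpr (Fin.lt_def.mp hab), Fin.mk_lt_mk.mpr (Fin.lt_def.mp hbc),
      Fin.lt_def.mpr (by omega), Fin.lt_def.mpr (by omega)⟩
  have hv : Avoids132 v := by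
    rw [Avoids132, contains132_iff]
    rintro ⟨a, b, c, hab, hbc, h1, h2⟩
    apply hw
    rw [contains132_iff]
    rw [Fin.lt_def] at h1 h2
    simp only [hvdef, Equiv.ofBijective_apply, hvfdef] at h1 h2
    refine ⟨⟨(J : ℕ) + 1 + (a : ℕ), by have := a.isLt; omega⟩,
      ⟨(J : ℕ) + 1 + (b : ℕ), by have := b.isLt; omega⟩,
      ⟨(J : ℕ) + 1 + (c : ℕ), by have := c.isLt; omega⟩,
      Fin.mk_lt_mk.mpr (by have := Fin.lt_def.mp hab; omega),
      Fin.mk_lt_mk.mpr (by have := Fin.lt_def.mp hbc; omega),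
      Fin.lt_def.mpr h1, Fin.lt_def.mpr h2⟩
  refine ⟨u, v, hu, hv, ?_⟩
  apply Equiv.ext
  intro i
  apply Fin.ext
  rw [glue_apply]
  rcases lt_trichotomy ((i : ℕ)) ((J : ℕ)) with h | h | h
  · rw [gf_lo hj u v h]
    have : (u ⟨(i : ℕ), h⟩ : ℕ)
        = (w ⟨(i : ℕ), by have := i.isLt; omega⟩ : ℕ) - (n - (J : ℕ)) := rfl
    rw [this]
    have hieq : (⟨(i : ℕ), by have := i.isLt; omega⟩ : Fin (n+1)) = i := Fin.ext rfl
    rw [hieq]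
    have := hpre i h
    omega
  · have : i = J := Fin.ext h
    rw [gf_mid hj u v h, this, hwJ]
  · rw [gf_hi hj u v h]
    have : (v ⟨(i : ℕ) - (J : ℕ) - 1, by have := i.isLt; omega⟩ : ℕ)
        = (w ⟨(J : ℕ) + 1 + ((i : ℕ) - (J : ℕ) - 1), by have := i.isLt; omega⟩ : ℕ) := rfl
    rw [this]
    congr 1
    exact congrArg w (Fin.ext (by simp; omega))

end Decomp
section Count

noncomputable def G (n : ℕ) :
    (Σ jf : Fin (n+1), {u : Perm (Fin (jf : ℕ)) // Avoids132 u} ×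
      {v : Perm (Fin (n - (jf : ℕ))) // Avoids132 v}) →
    {w : Perm (Fin (n+1)) // Avoids132 w} :=
  fun x => ⟨glue (Nat.lt_succ_iff.mp x.1.isLt) x.2.1.1 x.2.2.1,
    glue_avoids _ _ _ x.2.1.2 x.2.2.2⟩

set_option maxHeartbeats 1000000 in
lemma G_inj (n : ℕ) : Function.Injective (G n) := by
  rintro ⟨j1, ⟨u1, hu1⟩, ⟨v1, hv1⟩⟩ ⟨j2, ⟨u2, hu2⟩, ⟨v2, hv2⟩⟩ h
  simp only [G, Subtype.mk.injEq] at h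
  have hj1 : (j1 : ℕ) ≤ n := Nat.lt_succ_iff.mp j1.isLt
  have hj2 : (j2 : ℕ) ≤ n := Nat.lt_succ_iff.mp j2.isLt
  have hval : ∀ i : Fin (n+1),
      (glueFun hj1 u1 v1 i : ℕ) = (glueFun hj2 u2 v2 i : ℕ) := by
    intro i
    exact congrArg Fin.val (Equiv.ext_iff.mp h i)
  have hj12 : j1 = j2 := by
    rcases lt_trichotomy ((j1 : ℕ)) ((j2 : ℕ)) with hlt | heq | hgt
    · exfalso
      have h1 := hval j1
      rw [gf_mid hj1 u1 v1 rfl] at h1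
      have h2 := (gf_lo_range hj2 u2 v2 (i := j1) hlt).2
      omega
    · exact Fin.ext heq
    · exfalso
      have h1 := hval j2
      rw [gf_mid hj2 u2 v2 rfl] at h1
      have h2 := (gf_lo_range hj1 u1 v1 (i := j2) hgt).2
      omega
  subst hj12
  have hu12 : u1 = u2 := by
    apply Equiv.ext
    intro x
    apply Fin.ext
    have hxlt : ((⟨(x : ℕ), by have := x.isLt; omega⟩ : Fin (n+1)) : ℕ) < (j1 : ℕ) := x.isLt
    have h1 := hval ⟨(x : ℕ), by have := x.isLt; omega⟩
    rw [gf_lo hj1 u1 v1 hxlt, gf_lo hj2 u2 v2 hxlt] at h1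
    have key : ((u1 x : Fin (j1 : ℕ)) : ℕ) + (n - (j1 : ℕ))
        = ((u2 x : Fin (j1 : ℕ)) : ℕ) + (n - (j1 : ℕ)) := h1
    omega
  have hv12 : v1 = v2 := by
    apply Equiv.ext
    intro k
    apply Fin.ext
    have hklt : (j1 : ℕ) < (j1 : ℕ) + 1 + (k : ℕ) := by omega
    have h1 := hval ⟨(j1 : ℕ) + 1 + (k : ℕ), by have := k.isLt; omega⟩
    have g1 := gf_hi hj1 u1 v1 (i := ⟨(j1 : ℕ) + 1 + (k : ℕ), by have := k.isLt; omega⟩) hklt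
    have g2 := gf_hi hj2 u2 v2 (i := ⟨(j1 : ℕ) + 1 + (k : ℕ), by have := k.isLt; omega⟩) hklt
    replace h1 := g1.symm.trans (h1.trans g2)
    have he : (⟨(j1 : ℕ) + 1 + (k : ℕ) - (j1 : ℕ) - 1, by have := k.isLt; omega⟩
        : Fin (n - (j1 : ℕ))) = k :=
      Fin.ext (show (j1 : ℕ) + 1 + (k : ℕ) - (j1 : ℕ) - 1 = (k : ℕ) by omega)
    have key : ((v1 k : Fin (n - (j1 : ℕ))) : ℕ) = ((v2 k : Fin (n - (j1 : ℕ))) : ℕ) := by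
      rw [← he]; exact h1
    exact key
  subst hu12
  subst hv12
  rfl

lemma G_surj (n : ℕ) : Function.Surjective (G n) := by
  rintro ⟨w, hw⟩
  obtain ⟨j, hjle, u, v, hu, hv, hg⟩ := decomp w hw
  exact ⟨⟨⟨j, by omega⟩, ⟨u, hu⟩, ⟨v, hv⟩⟩, Subtype.ext hg⟩

lemma card_zero : Nat.card {w : Perm (Fin 0) // Avoids132 w} = 1 := by
  have hall : ∀ w : Perm (Fin 0), Avoids132 w := fun w ⟨f, _, _⟩ => (f 0).elim0
  haveI : Unique {w : Perm (Fin 0) // Avoids132 w} :=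
    ⟨⟨⟨1, hall 1⟩⟩, fun a => Subtype.ext (Equiv.ext fun x => x.elim0)⟩
  exact Nat.card_unique

lemma card_succ (n : ℕ) :
    Nat.card {w : Perm (Fin (n+1)) // Avoids132 w}
      = ∑ jf : Fin (n+1), Nat.card {u : Perm (Fin (jf : ℕ)) // Avoids132 u} *
          Nat.card {v : Perm (Fin (n - (jf : ℕ))) // Avoids132 v} := by
  classical
  rw [← Nat.card_eq_of_bijective (G n) ⟨G_inj n, G_surj n⟩]
  letI : ∀ m : ℕ, Fintype {w : Perm (Fin m) // Avoids132 w} := fun m => Fintype.ofFinite _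
  rw [Nat.card_eq_fintype_card, Fintype.card_sigma]
  simp only [Fintype.card_prod, Nat.card_eq_fintype_card]

lemma card_eq_catalan (n : ℕ) :
    Nat.card {w : Perm (Fin n) // Avoids132 w} = catalan n := by
  induction n using Nat.strong_induction_on with
  | _ n ih =>
    match n with
    | 0 => simpa using card_zero
    | m + 1 =>
      rw [card_succ, catalan_succ]
      apply Finset.sum_congr rfl
      intro jf _
      rw [ih jf (by have := jf.isLt; omega), ih (m - jf) (by omega)]

end Count

/-- the number of 132-avoiding permutations of length `n` is the
`n`-th Catalan number `(2n).choose n / (n+1)`. -/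
theorem stmt0 (n : ℕ) :
    Nat.card {w : Equiv.Perm (Fin n) // Avoids132 w} =
      Nat.choose (2 * n) n / (n + 1) := by
  rw [card_eq_catalan, catalan_eq_centralBinom_div]
  rfl
end

section
/- If w is an alternating, 132-avoiding permutation of odd length 2n+1, then the odd-indexed entries are strictly decreasing: w_1 > w_3 > w_5 > ··· > w_{2n+1}. -/
open Equiv

lemma contains132_of {m : ℕ} (v : Fin m → ℕ) (a b c : Fin m) (hab : a < b) (hbc : b < c)
    (h1 : v a < v c) (h2 : v c < v b) : Contains v pat132 := by
  refine ⟨![a, b, c], ?_, ?_⟩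
  · intro x y hxy
    fin_cases x <;> fin_cases y <;> simp_all <;>
      first
        | exact hab
        | exact hbc
        | exact lt_trans hab hbc
  · intro x y
    fin_cases x <;> fin_cases y <;>
      simp [pat132] <;>
      first
        | exact h1
        | exact h2
        | exact lt_trans h1 h2
        | exact lt_asymm h1
        | exact lt_asymm h2
        | exact lt_asymm (lt_trans h1 h2)
        | exact le_of_lt h1
        | exact le_of_lt h2
        | exact le_of_lt (lt_trans h1 h2)

/-- the odd-indexed (1-indexed; even 0-indexed) entries of an
alternating 132-avoiding permutation of odd length are strictly decreasing. -/
theorem stmt7 (n : ℕ) (w : Equiv.Perm (Fin (2 * n + 1))) (h1 : Alternating w)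
    (h2 : Avoids132 w) :
    ∀ i j : Fin (2 * n + 1), i < j → (i : ℕ) % 2 = 0 → (j : ℕ) % 2 = 0 →
      w j < w i := by
  -- step lemma: w (i+2) < w i for even i
  have step : ∀ i : ℕ, i % 2 = 0 → ∀ h : i + 2 < 2 * n + 1,
      w ⟨i + 2, h⟩ < w ⟨i, by omega⟩ := by
    intro i hie h
    by_contra hle
    push_neg at hle
    have hne : w ⟨i, by omega⟩ ≠ w ⟨i + 2, h⟩ := by
      intro he
      have := w.injective he
      simp [Fin.ext_iff] at this
    have hac : w ⟨i, by omega⟩ < w ⟨i + 2, h⟩ := lt_of_le_of_ne hle hne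
    have hab : w ⟨i, by omega⟩ < w ⟨i + 1, by omega⟩ :=
      (h1 i (by omega)).1 hie
    have hcb : w ⟨i + 2, h⟩ < w ⟨i + 1, by omega⟩ := by
      have := (h1 (i + 1) (by omega)).2 (by omega)
      exact this
    exact h2 (contains132_of (fun i => (w i : ℕ)) ⟨i, by omega⟩ ⟨i + 1, by omega⟩ ⟨i + 2, h⟩
      (Fin.mk_lt_mk.mpr (by omega)) (Fin.mk_lt_mk.mpr (by omega)) hac hcb)
  -- chain
  have chain : ∀ d : ℕ, ∀ i : ℕ, i % 2 = 0 → ∀ h : i + 2 * (d + 1) < 2 * n + 1,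
      w ⟨i + 2 * (d + 1), h⟩ < w ⟨i, by omega⟩ := by
    intro d
    induction d with
    | zero => intro i hie h; exact step i hie (by omega)
    | succ d ih =>
      intro i hie h
      have h1' : w ⟨i + 2 * (d + 1) + 2, by omega⟩ < w ⟨i + 2 * (d + 1), by omega⟩ :=
        step (i + 2 * (d + 1)) (by omega) (by omega)
      have h2' : w ⟨i + 2 * (d + 1), by omega⟩ < w ⟨i, by omega⟩ := ih i hie (by omega)
      have : (⟨i + 2 * (d + 1 + 1), h⟩ : Fin (2 * n + 1)) = ⟨i + 2 * (d + 1) + 2, by omega⟩ := by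
        ext; simp; omega
      rw [this]
      exact lt_trans h1' h2'
  intro i j hij hie hje
  obtain ⟨d, hd⟩ : ∃ d, (j : ℕ) = (i : ℕ) + 2 * (d + 1) := by
    have hlt : (i : ℕ) < (j : ℕ) := hij
    refine ⟨((j : ℕ) - (i : ℕ)) / 2 - 1, by omega⟩
  have hj2 : j = ⟨(i : ℕ) + 2 * (d + 1), by omega⟩ := by ext; simp [hd]
  rw [hj2]
  have := chain d (i : ℕ) hie (by omega)
  simpa using this
end

section
/- If w is an alternating, 132-avoiding permutation of odd length 2n+1, then the left-to-right minima of w are exactly its odd-indexed entries; in particular w_{2n+1} = 1. -/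
open Equiv

lemma contains132_aux {N : ℕ} {α : Type*} [LinearOrder α] (v : Fin N → α) (a b c : Fin N)
    (hab : a < b) (hbc : b < c) (h1 : v a < v c) (h2 : v c < v b) :
    Contains v pat132 := by
  have h3 : v a < v b := h1.trans h2
  refine ⟨fun x => if (x : ℕ) = 0 then a else if (x : ℕ) = 1 then b else c, ?_, ?_⟩
  · intro x y hxy
    have hxy' : (x : ℕ) < (y : ℕ) := hxy
    have hx := x.isLt
    have hy := y.isLt
    rcases (by omega : (x:ℕ) = 0 ∧ (y:ℕ) = 1 ∨ (x:ℕ) = 0 ∧ (y:ℕ) = 2 ∨ (x:ℕ) = 1 ∧ (y:ℕ) = 2)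
      with ⟨hx0, hy0⟩ | ⟨hx0, hy0⟩ | ⟨hx0, hy0⟩ <;>
      simp only [hx0, hy0] <;> norm_num <;>
      first | exact hab | exact hbc | exact hab.trans hbc
  · intro x y
    have hx := x.isLt
    have hy := y.isLt
    have hp : ∀ z : Fin 3, (pat132 z : ℕ) = if (z : ℕ) = 0 then 0 else if (z : ℕ) = 1 then 2 else 1 := by
      intro z
      have hz := z.isLt
      rcases (by omega : (z:ℕ) = 0 ∨ (z:ℕ) = 1 ∨ (z:ℕ) = 2) with h | h | h <;>
        · rw [show z = (⟨(z:ℕ), hz⟩ : Fin 3) from rfl]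
          simp only [pat132, h]
          norm_num [Matrix.cons_val_zero, Matrix.cons_val_one, Matrix.head_cons]
    rw [hp x, hp y]
    rcases (by omega : (x:ℕ) = 0 ∨ (x:ℕ) = 1 ∨ (x:ℕ) = 2) with h | h | h <;>
      rcases (by omega : (y:ℕ) = 0 ∨ (y:ℕ) = 1 ∨ (y:ℕ) = 2) with h' | h' | h' <;>
      simp only [h, h'] <;> norm_num <;>
      first
      | exact h1 | exact h2 | exact h3
      | exact h1.le | exact h2.le | exact h3.le
      | exact le_refl _

/-- the left-to-right minima of an alternating 132-avoiding
permutation of odd length are exactly its odd-indexed (1-indexed; even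
0-indexed) entries; in particular the final entry is the minimum. -/
theorem stmt8 (n : ℕ) (w : Equiv.Perm (Fin (2 * n + 1))) (h1 : Alternating w)
    (h2 : Avoids132 w) :
    (∀ i : Fin (2 * n + 1), (∀ j, j < i → w i < w j) ↔ (i : ℕ) % 2 = 0) ∧
    w (Fin.last (2 * n)) = 0 := by
  have main : ∀ i : Fin (2 * n + 1), (i : ℕ) % 2 = 0 → ∀ j, j < i → w i < w j := by
    intro i hi j hji
    by_contra hlt
    have hwj : w j < w i := lt_of_le_of_ne (not_lt.1 hlt) (by
      intro h; exact absurd (w.injective h) (Fin.ne_of_lt hji))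
    have hji' : (j : ℕ) < (i : ℕ) := hji
    have hilt := i.isLt
    have hm : (i : ℕ) - 1 + 1 < 2 * n + 1 := by omega
    set i1 : Fin (2 * n + 1) := ⟨(i : ℕ) - 1, by omega⟩ with hi1
    have halt : w i < w i1 := by
      have h := (h1 ((i : ℕ) - 1) hm).2 (by omega)
      have hieq : (⟨(i : ℕ) - 1 + 1, hm⟩ : Fin (2 * n + 1)) = i := Fin.ext (by simp; omega)
      rw [hieq] at h
      exact h
    have hji2 : (j : ℕ) < (i : ℕ) - 1 := by
      by_contra hc
      have : j = i1 := Fin.ext (by simp [hi1]; omega)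
      rw [this] at hwj
      exact lt_asymm hwj halt
    exact h2 (contains132_aux (fun x => w x) j i1 i hji2 (by show (i : ℕ) - 1 < (i : ℕ); omega) hwj halt)
  have iff1 : ∀ i : Fin (2 * n + 1), (∀ j, j < i → w i < w j) ↔ (i : ℕ) % 2 = 0 := by
    intro i
    constructor
    · intro hmin
      by_contra hodd
      have hi : (i : ℕ) % 2 = 1 := by omega
      have hilt := i.isLt
      have hm : (i : ℕ) - 1 + 1 < 2 * n + 1 := by omega
      have h := (h1 ((i : ℕ) - 1) hm).1 (by omega)
      have hieq : (⟨(i : ℕ) - 1 + 1, hm⟩ : Fin (2 * n + 1)) = i := Fin.ext (by simp; omega)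
      rw [hieq] at h
      have := hmin ⟨(i : ℕ) - 1, by omega⟩ (by show (i : ℕ) - 1 < (i : ℕ); omega)
      exact lt_asymm h this
    · intro heven j hji
      exact main i heven j hji
  refine ⟨iff1, ?_⟩
  have hlast : ((Fin.last (2 * n) : Fin (2 * n + 1)) : ℕ) % 2 = 0 := by
    simp only [Fin.val_last]; omega
  have hmin := main (Fin.last (2 * n)) hlast
  by_contra hne
  set k : Fin (2 * n + 1) := w.symm 0 with hk
  have hwk : w k = 0 := w.apply_symm_apply 0
  have hkne : k ≠ Fin.last (2 * n) := by
    intro h; rw [h] at hwk; exact hne hwk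
  have hklt : k < Fin.last (2 * n) := lt_of_le_of_ne (Fin.le_last k) hkne
  have := hmin k hklt
  rw [hwk] at this
  exact absurd this (by simp [Fin.lt_def])
end

section
/- Let φ: S_n(132) → A_{2n+1}(132) be the bijection characterized by: the even-indexed entries of φ(w) are order-isomorphic to w. If w ∈ S_n(132) contains a 132-avoiding pattern p ∈ S_k(132), then φ(w) contains φ(p) ∈ A_{2k+1}(132). -/
open Equiv

set_option maxHeartbeats 2000000

lemma mk132 {N : ℕ} (w : Equiv.Perm (Fin N)) (a b c : Fin N) (hab : a < b) (hbc : b < c)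
    (h1 : w a < w c) (h2 : w c < w b) : Contains (fun i => w i) pat132 := by
  refine ⟨![a, b, c], ?_, ?_⟩
  · intro i j hij
    fin_cases i <;> fin_cases j <;>
      simp_all [Matrix.cons_val_zero, Matrix.cons_val_one] <;>
      first
        | exact hab | exact hbc | exact hab.trans hbc
  · intro i j
    fin_cases i <;> fin_cases j <;>
      simp [pat132, Matrix.cons_val_zero, Matrix.cons_val_one] <;>
      first
        | exact h1.trans h2 | exact h1 | exact h2
        | exact le_of_lt h1 | exact le_of_lt h2 | exact le_of_lt (h1.trans h2)

/-- extended value function -/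
def Uext {n : ℕ} (u : Equiv.Perm (Fin n)) : ℕ → ℕ :=
  fun t => if h : t < n then (u ⟨t, h⟩ : ℕ) else n

section
variable {n : ℕ} {w : Equiv.Perm (Fin (2 * n + 1))} {u : Equiv.Perm (Fin n)}
variable (halt : Alternating w) (hav : Avoids132 w) (hoi : OrderIsoEven w u)
include halt hav

/-- alternating at a valley -/
lemma alt_up (t : ℕ) (ht : t < n) :
    w ⟨2 * t, by omega⟩ < w ⟨2 * t + 1, by omega⟩ :=
  (halt (2 * t) (by omega)).1 (by omega)

/-- alternating at a peak -/
lemma alt_down (t : ℕ) (ht : t < n) :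
    w ⟨2 * t + 2, by omega⟩ < w ⟨2 * t + 1, by omega⟩ := by
  exact (halt (2 * t + 1) (by omega)).2 (by omega)

/-- consecutive valleys decrease -/
lemma valley_step (s : ℕ) (hs : s + 1 ≤ n) :
    w ⟨2 * (s + 1), by omega⟩ < w ⟨2 * s, by omega⟩ := by
  by_contra hcon
  have hne : w ⟨2 * s, by omega⟩ ≠ w ⟨2 * (s + 1), by omega⟩ := by
    intro h
    have h2 : 2 * s = 2 * (s + 1) := congrArg Fin.val (w.injective h)
    omega
  have h1 : w ⟨2 * s, by omega⟩ < w ⟨2 * (s + 1), by omega⟩ :=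
    lt_of_le_of_ne (not_lt.mp hcon) hne
  have h2 : w ⟨2 * (s + 1), by omega⟩ < w ⟨2 * s + 1, by omega⟩ := by
    exact alt_down halt hav s hs
  exact hav (mk132 w ⟨2 * s, by omega⟩ ⟨2 * s + 1, by omega⟩ ⟨2 * (s + 1), by omega⟩
    (by simp [Fin.lt_def]) (by simp [Fin.lt_def]; omega) h1 h2)

/-- valleys strictly decrease -/
lemma valley_dec (s t : ℕ) (hst : s < t) (ht : t ≤ n) :
    w ⟨2 * t, by omega⟩ < w ⟨2 * s, by omega⟩ := by
  induction t with
  | zero => omega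
  | succ m ih =>
    rcases Nat.lt_or_ge s m with h | h
    · exact (valley_step halt hav m ht).trans (ih h (by omega))
    · have : s = m := by omega
      subst this
      exact valley_step halt hav s ht

/-- valleys: non-strict version -/
lemma valley_le (s t : ℕ) (hst : s ≤ t) (ht : t ≤ n) :
    w ⟨2 * t, by omega⟩ ≤ w ⟨2 * s, by omega⟩ := by
  rcases Nat.lt_or_ge s t with h | h
  · exact le_of_lt (valley_dec halt hav s t h ht)
  · have : s = t := by omega
    subst this; exact le_refl _

end

section
variable {n : ℕ} {w : Equiv.Perm (Fin (2 * n + 1))} {u : Equiv.Perm (Fin n)}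
variable (halt : Alternating w) (hav : Avoids132 w) (hoi : OrderIsoEven w u)
include halt hav hoi

/-- peak vs peak -/
lemma lemPP (i j : ℕ) (hi : i < n) (hj : j < n) :
    (w ⟨2 * i + 1, by omega⟩ < w ⟨2 * j + 1, by omega⟩ ↔ Uext u i < Uext u j) := by
  simp only [Uext, dif_pos hi, dif_pos hj]
  exact (hoi ⟨i, hi⟩ ⟨j, hj⟩).symm

/-- peak below valley: the hard direction -/
lemma peak_lt_valley (i t : ℕ) (hi : i < n) (ht : t < i) (huv : Uext u i < Uext u t) :
    w ⟨2 * i + 1, by omega⟩ < w ⟨2 * t, by omega⟩ := by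
  by_contra hcon
  have hne : w ⟨2 * t, by omega⟩ ≠ w ⟨2 * i + 1, by omega⟩ := by
    intro h
    have h2 : 2 * t = 2 * i + 1 := congrArg Fin.val (w.injective h)
    omega
  have h1 : w ⟨2 * t, by omega⟩ < w ⟨2 * i + 1, by omega⟩ :=
    lt_of_le_of_ne (not_lt.mp hcon) hne
  -- w (2i+1) < w (2t+1) from order iso
  have h2 : w ⟨2 * i + 1, by omega⟩ < w ⟨2 * t + 1, by omega⟩ := by
    have ht' : t < n := by omega
    have := (hoi ⟨i, hi⟩ ⟨t, ht'⟩).mp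
    apply this
    simp only [Uext, dif_pos hi, dif_pos ht'] at huv
    exact huv
  exact hav (mk132 w ⟨2 * t, by omega⟩ ⟨2 * t + 1, by omega⟩ ⟨2 * i + 1, by omega⟩
    (by simp [Fin.lt_def]) (by simp [Fin.lt_def]; omega) h1 h2)

/-- full peak-valley characterization -/
lemma lemPV (i t : ℕ) (hi : i < n) (ht : t ≤ n) :
    (w ⟨2 * i + 1, by omega⟩ < w ⟨2 * t, by omega⟩ ↔ (t ≤ i ∧ Uext u i < Uext u t)) := by
  constructor
  · intro h
    by_contra hcon
    rw [not_and_or] at hcon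
    -- show the opposite inequality in all failing cases
    have hop : w ⟨2 * t, by omega⟩ < w ⟨2 * i + 1, by omega⟩ := by
      rcases hcon with hcon | hcon
      · -- i < t : valley t ≤ valley (i+1) < peak i
        have h1 : w ⟨2 * t, by omega⟩ ≤ w ⟨2 * (i + 1), by omega⟩ :=
          valley_le halt hav (i + 1) t (by omega) ht
        exact lt_of_le_of_lt h1 (alt_down halt hav i hi)
      · -- t ≤ i (or not), Uext u t ≤ Uext u i
        rcases Nat.lt_or_ge i t with hit | hit
        · have h1 : w ⟨2 * t, by omega⟩ ≤ w ⟨2 * (i + 1), by omega⟩ :=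
            valley_le halt hav (i + 1) t (by omega) ht
          exact lt_of_le_of_lt h1 (alt_down halt hav i hi)
        · -- t ≤ i, Uext u t ≤ Uext u i
          have ht' : t < n := by omega
          rcases Nat.eq_or_lt_of_le hit with heq | hlt
          · -- t = i
            subst heq
            exact alt_up halt hav t (by omega)
          · -- t < i, so u t ≠ u i, so Uext u t < Uext u i
            have hne2 : (u ⟨t, ht'⟩ : ℕ) ≠ (u ⟨i, hi⟩ : ℕ) := by
              intro h
              have := u.injective (Fin.val_injective h)
              have := congrArg Fin.val this
              simp at this
              omega
            have hUlt : Uext u t < Uext u i := by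
              simp only [Uext, dif_pos hi, dif_pos ht'] at hcon ⊢
              omega
            have h2 : w ⟨2 * t + 1, by omega⟩ < w ⟨2 * i + 1, by omega⟩ := by
              apply (hoi ⟨t, ht'⟩ ⟨i, hi⟩).mp
              simp only [Uext, dif_pos hi, dif_pos ht'] at hUlt
              exact hUlt
            exact (alt_up halt hav t ht').trans h2
    exact absurd h (asymm hop)
  · rintro ⟨hti, hU⟩
    have ht' : t < i := by
      rcases Nat.eq_or_lt_of_le hti with heq | h
      · subst heq; exact absurd hU (lt_irrefl _)
      · exact h
    exact peak_lt_valley halt hav hoi i t hi ht' hU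

/-- valley vs valley -/
lemma lemVV (s t : ℕ) (hs : s ≤ n) (ht : t ≤ n) :
    (w ⟨2 * s, by omega⟩ < w ⟨2 * t, by omega⟩ ↔ t < s) := by
  constructor
  · intro h
    by_contra hcon
    rcases Nat.eq_or_lt_of_le (not_lt.mp hcon) with heq | hlt
    · subst heq; exact absurd h (lt_irrefl _)
    · exact absurd h (asymm (valley_dec halt hav s t hlt ht))
  · intro h
    exact valley_dec halt hav t s h hs

/-- valley vs peak -/
lemma lemVP (s j : ℕ) (hs : s ≤ n) (hj : j < n) :
    (w ⟨2 * s, by omega⟩ < w ⟨2 * j + 1, by omega⟩ ↔ ¬(s ≤ j ∧ Uext u j < Uext u s)) := by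
  have hne : w ⟨2 * j + 1, by omega⟩ ≠ w ⟨2 * s, by omega⟩ := by
    intro h
    have h2 : 2 * j + 1 = 2 * s := congrArg Fin.val (w.injective h)
    omega
  rw [← lemPV halt hav hoi j s hj hs]
  constructor
  · exact fun h => asymm h
  · intro h
    exact lt_of_le_of_ne (not_lt.mp h) hne.symm
end

/-- extension of the embedding to ℕ, sending `k ↦ n` -/
def Fext {n k : ℕ} (f : Fin k → Fin n) : ℕ → ℕ :=
  fun t => if h : t < k then (f ⟨t, h⟩ : ℕ) else n

lemma Fext_le {n k : ℕ} (f : Fin k → Fin n) (t : ℕ) : Fext f t ≤ n := by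
  unfold Fext
  split
  · exact le_of_lt (f _).isLt
  · exact le_refl n

lemma Fext_lt {n k : ℕ} (f : Fin k → Fin n) {t : ℕ} (h : t < k) : Fext f t < n := by
  unfold Fext
  rw [dif_pos h]
  exact (f _).isLt

lemma Fext_mono {n k : ℕ} {f : Fin k → Fin n} (hf : StrictMono f) {s t : ℕ}
    (hst : s < t) (ht : t ≤ k) : Fext f s < Fext f t := by
  have hs : s < k := by omega
  rcases Nat.lt_or_ge t k with h | h
  · unfold Fext
    rw [dif_pos hs, dif_pos h]
    exact hf (show (⟨s, hs⟩ : Fin k) < ⟨t, h⟩ from hst)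
  · have : Fext f t = n := by unfold Fext; rw [dif_neg (by omega)]
    rw [this]
    exact Fext_lt f hs

/-- the index embedding -/
def gemb {n k : ℕ} (f : Fin k → Fin n) : Fin (2 * k + 1) → Fin (2 * n + 1) :=
  fun a => ⟨min (2 * Fext f (a.val / 2) + a.val % 2) (2 * n), by omega⟩

lemma gemb_val {n k : ℕ} (f : Fin k → Fin n) (a : Fin (2 * k + 1)) :
    (gemb f a).val = 2 * Fext f (a.val / 2) + a.val % 2 := by
  have ha := a.isLt
  rcases Nat.mod_two_eq_zero_or_one a.val with h | h
  · have := Fext_le f (a.val / 2)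
    simp only [gemb]
    omega
  · have h2 : a.val / 2 < k := by omega
    have := Fext_lt f h2
    simp only [gemb]
    omega

/-- if `u ∈ S_n(132)` contains the pattern `p ∈ S_k(132)`, then
`φ(u)` contains `φ(p)`, where `φ` is characterized by the even-indexed entries
of `φ(w)` being order-isomorphic to `w`. -/
theorem stmt11 (n k : ℕ) (u : Equiv.Perm (Fin n)) (p : Equiv.Perm (Fin k))
    (hu : Avoids132 u) (hp : Avoids132 p)
    (φu : Equiv.Perm (Fin (2 * n + 1)))
    (hφu : Alternating φu ∧ Avoids132 φu ∧ OrderIsoEven φu u)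
    (φp : Equiv.Perm (Fin (2 * k + 1)))
    (hφp : Alternating φp ∧ Avoids132 φp ∧ OrderIsoEven φp p)
    (hcont : ContainsP u p) :
    ContainsP φu φp := by
  obtain ⟨haltu, havu, hoiu⟩ := hφu
  obtain ⟨haltp, havp, hoip⟩ := hφp
  obtain ⟨f, hf, hfiff⟩ := hcont
  -- transfer lemmas
  have hT1 : ∀ i j : ℕ, i ≤ k → j ≤ k →
      (Uext p i < Uext p j ↔ Uext u (Fext f i) < Uext u (Fext f j)) := by
    intro i j hi hj
    rcases Nat.lt_or_ge i k with hik | hik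
    · rcases Nat.lt_or_ge j k with hjk | hjk
      · -- both in range
        have e1 : Uext p i = (p ⟨i, hik⟩ : ℕ) := dif_pos hik
        have e2 : Uext p j = (p ⟨j, hjk⟩ : ℕ) := dif_pos hjk
        have e3 : Uext u (Fext f i) = (u (f ⟨i, hik⟩) : ℕ) := by
          unfold Uext Fext
          rw [dif_pos hik, dif_pos (f ⟨i, hik⟩).isLt]
        have e4 : Uext u (Fext f j) = (u (f ⟨j, hjk⟩) : ℕ) := by
          unfold Uext Fext
          rw [dif_pos hjk, dif_pos (f ⟨j, hjk⟩).isLt]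
        rw [e1, e2, e3, e4]
        exact hfiff ⟨i, hik⟩ ⟨j, hjk⟩
      · -- j = k : both sides true
        have hjk' : j = k := by omega
        have e2 : Uext p j = k := dif_neg (by omega)
        have e4 : Uext u (Fext f j) = n := by
          unfold Uext Fext
          rw [dif_neg (by omega : ¬ j < k), dif_neg (lt_irrefl n)]
        have e1 : Uext p i < k := by
          unfold Uext; rw [dif_pos hik]; exact (p _).isLt
        have e3 : Uext u (Fext f i) < n := by
          unfold Uext Fext
          rw [dif_pos hik, dif_pos (f ⟨i, hik⟩).isLt]
          exact (u _).isLt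
        rw [e2, e4]
        constructor
        · intro _; omega
        · intro _; omega
    · -- i = k : both sides false
      have hik' : i = k := by omega
      have e1 : Uext p i = k := dif_neg (by omega)
      have e3 : Uext u (Fext f i) = n := by
        unfold Uext Fext
        rw [dif_neg (by omega : ¬ i < k), dif_neg (lt_irrefl n)]
      have e2 : Uext p j ≤ k := by
        unfold Uext; split
        · exact le_of_lt (p _).isLt
        · exact le_refl _
      have e4 : Uext u (Fext f j) ≤ n := by
        unfold Uext; split
        · exact le_of_lt (u _).isLt
        · exact le_refl _
      rw [e1, e3]
      constructor
      · intro h; omega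
      · intro h; omega
  have hT2 : ∀ s t : ℕ, s ≤ k → t ≤ k → (s ≤ t ↔ Fext f s ≤ Fext f t) := by
    intro s t hs ht
    constructor
    · intro h
      rcases Nat.eq_or_lt_of_le h with heq | hlt
      · subst heq; exact le_refl _
      · exact le_of_lt (Fext_mono hf hlt ht)
    · intro h
      by_contra hcon
      exact absurd h (not_le.mpr (Fext_mono hf (by omega) hs))
  have hT2s : ∀ s t : ℕ, s ≤ k → t ≤ k → (s < t ↔ Fext f s < Fext f t) := by
    intro s t hs ht
    constructor
    · intro h; exact Fext_mono hf h ht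
    · intro h
      by_contra hcon
      have := (hT2 t s ht hs).mp (by omega)
      omega
  refine ⟨gemb f, ?_, ?_⟩
  · -- strict mono
    intro a b hab
    rw [Fin.lt_def, gemb_val, gemb_val]
    have hab' : a.val < b.val := hab
    have hb := b.isLt
    rcases Nat.lt_or_ge (a.val / 2) (b.val / 2) with h | h
    · have := Fext_mono hf h (by omega)
      have h1 := a.val.mod_two_eq_zero_or_one
      have h2 := b.val.mod_two_eq_zero_or_one
      omega
    · have heq : a.val / 2 = b.val / 2 := by omega
      rw [heq]
      omega
  · -- the order iff
    intro a b
    have ha := a.isLt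
    have hb := b.isLt
    rcases Nat.mod_two_eq_zero_or_one a.val with hea | hea <;>
      rcases Nat.mod_two_eq_zero_or_one b.val with heb | heb
    · -- a even (valley), b even (valley)
      obtain ⟨sa, hsa, ha2⟩ : ∃ s, s ≤ k ∧ a.val = 2 * s := ⟨a.val / 2, by omega, by omega⟩
      obtain ⟨sb, hsb, hb2⟩ : ∃ s, s ≤ k ∧ b.val = 2 * s := ⟨b.val / 2, by omega, by omega⟩
      have e_ga : gemb f a = (⟨2 * Fext f sa, by have := Fext_le f sa; omega⟩ :
          Fin (2 * n + 1)) := by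
        apply Fin.ext
        rw [gemb_val]
        show 2 * Fext f (a.val / 2) + a.val % 2 = 2 * Fext f sa
        have h1 : a.val / 2 = sa := by omega
        rw [h1, hea]
        omega
      have e_gb : gemb f b = (⟨2 * Fext f sb, by have := Fext_le f sb; omega⟩ :
          Fin (2 * n + 1)) := by
        apply Fin.ext
        rw [gemb_val]
        show 2 * Fext f (b.val / 2) + b.val % 2 = 2 * Fext f sb
        have h1 : b.val / 2 = sb := by omega
        rw [h1, heb]
        omega
      have e_a : a = (⟨2 * sa, by omega⟩ : Fin (2 * k + 1)) := Fin.ext ha2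
      have e_b : b = (⟨2 * sb, by omega⟩ : Fin (2 * k + 1)) := Fin.ext hb2
      rw [e_ga, e_gb, e_a, e_b]
      exact (lemVV haltp havp hoip sa sb hsa hsb).trans
        ((hT2s sb sa hsb hsa).trans
          (lemVV haltu havu hoiu (Fext f sa) (Fext f sb) (Fext_le f _) (Fext_le f _)).symm)
    · -- a even (valley), b odd (peak)
      obtain ⟨sa, hsa, ha2⟩ : ∃ s, s ≤ k ∧ a.val = 2 * s := ⟨a.val / 2, by omega, by omega⟩
      obtain ⟨sb, hsb, hb2⟩ : ∃ s, s < k ∧ b.val = 2 * s + 1 :=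
        ⟨b.val / 2, by omega, by omega⟩
      have e_ga : gemb f a = (⟨2 * Fext f sa, by have := Fext_le f sa; omega⟩ :
          Fin (2 * n + 1)) := by
        apply Fin.ext
        rw [gemb_val]
        show 2 * Fext f (a.val / 2) + a.val % 2 = 2 * Fext f sa
        have h1 : a.val / 2 = sa := by omega
        rw [h1, hea]
        omega
      have e_gb : gemb f b = (⟨2 * Fext f sb + 1, by have := Fext_lt f hsb; omega⟩ :
          Fin (2 * n + 1)) := by
        apply Fin.ext
        rw [gemb_val]
        show 2 * Fext f (b.val / 2) + b.val % 2 = 2 * Fext f sb + 1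
        have h1 : b.val / 2 = sb := by omega
        rw [h1, heb]
      have e_a : a = (⟨2 * sa, by omega⟩ : Fin (2 * k + 1)) := Fin.ext ha2
      have e_b : b = (⟨2 * sb + 1, by omega⟩ : Fin (2 * k + 1)) := Fin.ext hb2
      rw [e_ga, e_gb, e_a, e_b]
      exact (lemVP haltp havp hoip sa sb hsa hsb).trans
        ((not_congr (and_congr (hT2 sa sb hsa (by omega)) (hT1 sb sa (by omega) hsa))).trans
          (lemVP haltu havu hoiu (Fext f sa) (Fext f sb) (Fext_le f _) (Fext_lt f hsb)).symm)
    · -- a odd (peak), b even (valley)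
      obtain ⟨sa, hsa, ha2⟩ : ∃ s, s < k ∧ a.val = 2 * s + 1 :=
        ⟨a.val / 2, by omega, by omega⟩
      obtain ⟨sb, hsb, hb2⟩ : ∃ s, s ≤ k ∧ b.val = 2 * s := ⟨b.val / 2, by omega, by omega⟩
      have e_ga : gemb f a = (⟨2 * Fext f sa + 1, by have := Fext_lt f hsa; omega⟩ :
          Fin (2 * n + 1)) := by
        apply Fin.ext
        rw [gemb_val]
        show 2 * Fext f (a.val / 2) + a.val % 2 = 2 * Fext f sa + 1
        have h1 : a.val / 2 = sa := by omega
        rw [h1, hea]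
      have e_gb : gemb f b = (⟨2 * Fext f sb, by have := Fext_le f sb; omega⟩ :
          Fin (2 * n + 1)) := by
        apply Fin.ext
        rw [gemb_val]
        show 2 * Fext f (b.val / 2) + b.val % 2 = 2 * Fext f sb
        have h1 : b.val / 2 = sb := by omega
        rw [h1, heb]
        omega
      have e_a : a = (⟨2 * sa + 1, by omega⟩ : Fin (2 * k + 1)) := Fin.ext ha2
      have e_b : b = (⟨2 * sb, by omega⟩ : Fin (2 * k + 1)) := Fin.ext hb2
      rw [e_ga, e_gb, e_a, e_b]
      exact (lemPV haltp havp hoip sa sb hsa hsb).trans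
        ((and_congr (hT2 sb sa hsb (by omega)) (hT1 sa sb (by omega) hsb)).trans
          (lemPV haltu havu hoiu (Fext f sa) (Fext f sb) (Fext_lt f hsa) (Fext_le f _)).symm)
    · -- a odd (peak), b odd (peak)
      obtain ⟨sa, hsa, ha2⟩ : ∃ s, s < k ∧ a.val = 2 * s + 1 :=
        ⟨a.val / 2, by omega, by omega⟩
      obtain ⟨sb, hsb, hb2⟩ : ∃ s, s < k ∧ b.val = 2 * s + 1 :=
        ⟨b.val / 2, by omega, by omega⟩
      have e_ga : gemb f a = (⟨2 * Fext f sa + 1, by have := Fext_lt f hsa; omega⟩ :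
          Fin (2 * n + 1)) := by
        apply Fin.ext
        rw [gemb_val]
        show 2 * Fext f (a.val / 2) + a.val % 2 = 2 * Fext f sa + 1
        have h1 : a.val / 2 = sa := by omega
        rw [h1, hea]
      have e_gb : gemb f b = (⟨2 * Fext f sb + 1, by have := Fext_lt f hsb; omega⟩ :
          Fin (2 * n + 1)) := by
        apply Fin.ext
        rw [gemb_val]
        show 2 * Fext f (b.val / 2) + b.val % 2 = 2 * Fext f sb + 1
        have h1 : b.val / 2 = sb := by omega
        rw [h1, heb]
      have e_a : a = (⟨2 * sa + 1, by omega⟩ : Fin (2 * k + 1)) := Fin.ext ha2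
      have e_b : b = (⟨2 * sb + 1, by omega⟩ : Fin (2 * k + 1)) := Fin.ext hb2
      rw [e_ga, e_gb, e_a, e_b]
      exact (lemPP haltp havp hoip sa sb hsa hsb).trans
        ((hT1 sa sb (by omega) (by omega)).trans
          (lemPP haltu havu hoiu (Fext f sa) (Fext f sb) (Fext_lt f hsa) (Fext_lt f hsb)).symm)
end

section
/- Let φ: S_n(132) → A_{2n+1}(132) be the bijection characterized by the even-indexed entries of φ(w) being order-isomorphic to w. Suppose φ(w) contains a pattern q, and q contains an instance of a pattern p using no left-to-right minima of q. Then w contains p. -/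
open Equiv

/-- In an alternating 132-avoiding permutation, entries at even positions
are left-to-right minima. -/
lemma even_pos_min {N : ℕ} (φw : Equiv.Perm (Fin N)) (halt : Alternating φw)
    (hav : Avoids132 φw) (t s : Fin N) (ht : (t : ℕ) % 2 = 0) (hst : s < t) :
    φw t < φw s := by
  by_contra hcon
  have hne : φw s ≠ φw t := fun h => (Fin.ne_of_lt hst) (φw.injective h)
  have hlt : φw s < φw t := lt_of_le_of_ne (not_lt.mp hcon) hne
  have hstt : (s : ℕ) < (t : ℕ) := hst
  have htN : (t : ℕ) < N := t.isLt
  have ht1 : (t : ℕ) - 1 + 1 < N := by omega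
  set b : Fin N := ⟨(t : ℕ) - 1, by omega⟩ with hb
  have hmid : φw ⟨(t : ℕ) - 1 + 1, ht1⟩ < φw b := (halt ((t : ℕ) - 1) ht1).2 (by omega)
  have hteq : (⟨(t : ℕ) - 1 + 1, ht1⟩ : Fin N) = t := Fin.ext (by simp; omega)
  rw [hteq] at hmid
  rcases Nat.lt_or_ge (s : ℕ) ((t : ℕ) - 1) with hs | hs
  · apply hav
    have hsb : φw s < φw b := hlt.trans hmid
    have hsb' : s < b := by rw [Fin.lt_def]; simp [hb]; omega
    have hbt : b < t := by rw [Fin.lt_def]; simp [hb]; omega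
    refine ⟨fun x => if (x : ℕ) = 0 then s else if (x : ℕ) = 1 then b else t, ?_, ?_⟩
    · rintro ⟨iv, hi⟩ ⟨jv, hj⟩ hij
      have hij' : iv < jv := hij
      interval_cases iv <;> interval_cases jv <;>
        first
          | omega
          | exact hsb'
          | exact hbt
          | exact hst
    · rintro ⟨iv, hi⟩ ⟨jv, hj⟩
      interval_cases iv <;> interval_cases jv <;>
        first
          | exact iff_of_true (show (0:ℕ)<2 by decide) hsb
          | exact iff_of_true (show (0:ℕ)<1 by decide) hlt
          | exact iff_of_true (show (1:ℕ)<2 by decide) hmid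
          | exact iff_of_false (show ¬(0:ℕ)<0 by decide) (lt_irrefl _)
          | exact iff_of_false (show ¬(2:ℕ)<2 by decide) (lt_irrefl _)
          | exact iff_of_false (show ¬(1:ℕ)<1 by decide) (lt_irrefl _)
          | exact iff_of_false (show ¬(2:ℕ)<0 by decide) (lt_asymm hsb)
          | exact iff_of_false (show ¬(2:ℕ)<1 by decide) (lt_asymm hmid)
          | exact iff_of_false (show ¬(1:ℕ)<0 by decide) (lt_asymm hlt)
  · have hseq : s = b := Fin.ext (by simp [hb]; omega)
    rw [hseq] at hlt
    exact absurd hlt (lt_asymm hmid)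

/-- if `φ(w)` contains a pattern `q`, and `q` contains an
instance of `p` using no left-to-right minima of `q`, then `w` contains `p`. -/
theorem stmt12 (n m k : ℕ) (w : Equiv.Perm (Fin n)) (hw : Avoids132 w)
    (φw : Equiv.Perm (Fin (2 * n + 1)))
    (hφ : Alternating φw ∧ Avoids132 φw ∧ OrderIsoEven φw w)
    (q : Equiv.Perm (Fin m)) (p : Equiv.Perm (Fin k))
    (hq : ContainsP φw q)
    (hpq : ∃ f : Fin k → Fin m, StrictMono f ∧
      (∀ i j : Fin k, p i < p j ↔ q (f i) < q (f j)) ∧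
      ∀ i : Fin k, ¬ (∀ j : Fin m, j < f i → q (f i) < q j)) :
    ContainsP w p := by
  obtain ⟨halt, hav, hiso⟩ := hφ
  obtain ⟨g, hgmono, hgiso⟩ := hq
  obtain ⟨f, hfmono, hfiso, hfmin⟩ := hpq
  -- every position used by p in φw is odd
  have hodd : ∀ i : Fin k, ((g (f i)) : ℕ) % 2 = 1 := by
    intro i
    by_contra h
    have he : ((g (f i)) : ℕ) % 2 = 0 := by omega
    apply hfmin i
    intro j hj
    have hlt : φw (g (f i)) < φw (g j) :=
      even_pos_min φw halt hav (g (f i)) (g j) he (hgmono hj)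
    exact (hgiso (f i) j).mpr hlt
  have hbound : ∀ i : Fin k, ((g (f i)) : ℕ) / 2 < n := by
    intro i
    have h1 := (g (f i)).isLt
    have h2 := hodd i
    omega
  refine ⟨fun i => ⟨((g (f i)) : ℕ) / 2, hbound i⟩, ?_, ?_⟩
  · intro i j hij
    have h1 : ((g (f i)) : ℕ) < ((g (f j)) : ℕ) := hgmono (hfmono hij)
    have h2 := hodd i
    have h3 := hodd j
    simp only [Fin.mk_lt_mk]
    omega
  · intro i j
    have hieq : (⟨2 * (((g (f i)) : ℕ) / 2) + 1, by
        have := hbound i; omega⟩ : Fin (2 * n + 1)) = g (f i) := by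
      have := hodd i; exact Fin.ext (by simp; omega)
    have hjeq : (⟨2 * (((g (f j)) : ℕ) / 2) + 1, by
        have := hbound j; omega⟩ : Fin (2 * n + 1)) = g (f j) := by
      have := hodd j; exact Fin.ext (by simp; omega)
    have hw2 := hiso ⟨((g (f i)) : ℕ) / 2, hbound i⟩ ⟨((g (f j)) : ℕ) / 2, hbound j⟩
    simp only at hw2
    rw [hieq, hjeq] at hw2
    rw [hfiso i j, hgiso (f i) (f j)]
    exact hw2.symm
end
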